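/- Let n ≥ 1, p ∈ [1,∞) and α > 0. If f ∈ X^p is nonnegative with f = 0 a.e. on ℝ^n×(−∞,0), then J_α f is locally integrable on ℝ^n×(0,∞). -/

import Mathlib

open MeasureTheory Real Set
open scoped ENNReal

/-- The fractional heat kernel `Φ_α(x,t)`. -/
noncomputable def Phi (n : ℕ) (α : ℝ) (x : EuclideanSpace ℝ (Fin n)) (t : ℝ) : ℝ :=
  if 0 < t then
    (t ^ (α - 1) / Real.Gamma α) * (4 * Real.pi * t) ^ (-(n : ℝ) / 2) *
      Real.exp (-‖x‖ ^ 2 / (4 * t))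
  else 0

/-- `J_α f (x,t) = ∫_{-∞}^t ∫_{ℝ^n} Φ_α(x-ξ,t-τ) f(ξ,τ) dξ dτ`, as a value in `[0,∞]`. -/
noncomputable def J (n : ℕ) (α : ℝ) (f : EuclideanSpace ℝ (Fin n) → ℝ → ℝ)
    (x : EuclideanSpace ℝ (Fin n)) (t : ℝ) : ℝ≥0∞ :=
  ∫⁻ τ in Set.Iio t, ∫⁻ ξ, ENNReal.ofReal (Phi n α (x - ξ) (t - τ) * f ξ τ)

/-- Membership in `X^p`: measurable with finite `L^p` norm on `ℝ^n × (-∞,T)` for all `T`. -/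
def MemXp (n : ℕ) (p : ℝ≥0∞) (f : EuclideanSpace ℝ (Fin n) → ℝ → ℝ) : Prop :=
  Measurable (Function.uncurry f) ∧
  ∀ T : ℝ, eLpNorm (Function.uncurry f) p
    (volume.restrict {q : EuclideanSpace ℝ (Fin n) × ℝ | q.2 < T}) < ⊤

section Aux

lemma Phi_nonneg (n : ℕ) {α : ℝ} (hα : 0 < α) (x : EuclideanSpace ℝ (Fin n)) (t : ℝ) :
    0 ≤ Phi n α x t := by
  unfold Phi
  split
  · rename_i h
    have h1 : 0 ≤ t ^ (α - 1) := Real.rpow_nonneg h.le _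
    have h2 : 0 < Real.Gamma α := Real.Gamma_pos_of_pos hα
    have h3 : 0 ≤ (4 * Real.pi * t) ^ (-(n : ℝ) / 2) := Real.rpow_nonneg (by positivity) _
    positivity
  · exact le_rfl

lemma Phi_nonpos (n : ℕ) (α : ℝ) (x : EuclideanSpace ℝ (Fin n)) {t : ℝ} (ht : t ≤ 0) :
    Phi n α x t = 0 := by
  simp [Phi, not_lt.2 ht]

lemma measurable_Phi (n : ℕ) (α : ℝ) :
    Measurable (fun q : EuclideanSpace ℝ (Fin n) × ℝ => Phi n α q.1 q.2) := by
  unfold Phi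
  refine Measurable.ite (measurableSet_lt measurable_const measurable_snd) ?_ measurable_const
  fun_prop

lemma gauss_lint (n : ℕ) {b : ℝ} (hb : 0 < b) :
    ∫⁻ x : EuclideanSpace ℝ (Fin n), ENNReal.ofReal (Real.exp (-b * ‖x‖ ^ 2))
      = ENNReal.ofReal ((π / b) ^ ((n : ℝ) / 2)) := by
  have hint : Integrable (fun v : EuclideanSpace ℝ (Fin n) => Real.exp (-b * ‖v‖ ^ 2)) := by
    have h := GaussianFourier.integrable_cexp_neg_mul_sq_norm_add
      (V := EuclideanSpace ℝ (Fin n)) (b := (b : ℂ)) (by simpa using hb) 0 0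
    refine h.re.congr (Filter.Eventually.of_forall fun v => ?_)
    have : (-(b:ℂ) * (‖v‖:ℂ) ^ 2 + 0 * ((inner ℝ 0 v : ℝ) : ℂ)) = ((-b * ‖v‖ ^ 2 : ℝ) : ℂ) := by
      push_cast; ring
    simp only [this, RCLike.re_to_complex, Complex.exp_ofReal_re]
  rw [← ofReal_integral_eq_lintegral_ofReal hint
    (Filter.Eventually.of_forall fun v => (Real.exp_pos _).le)]
  rw [GaussianFourier.integral_rexp_neg_mul_sq_norm hb]
  congr 2
  simp [finrank_euclideanSpace_fin]

/-- The time profile of the kernel. -/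
noncomputable def rho (α s : ℝ) : ℝ≥0∞ :=
  ENNReal.ofReal (if 0 < s then s ^ (α - 1) / Real.Gamma α else 0)

lemma rho_nonpos {α s : ℝ} (hs : s ≤ 0) : rho α s = 0 := by
  simp [rho, not_lt.2 hs]

lemma measurable_rho (α : ℝ) : Measurable (rho α) := by
  unfold rho
  refine Measurable.ennreal_ofReal ?_
  exact Measurable.ite (measurableSet_lt measurable_const measurable_id) (by fun_prop)
    measurable_const

lemma lintegral_Phi (n : ℕ) {α : ℝ} (hα : 0 < α) (s : ℝ) :
    ∫⁻ x : EuclideanSpace ℝ (Fin n), ENNReal.ofReal (Phi n α x s) = rho α s := by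
  rw [rho]
  by_cases hs : 0 < s
  · simp only [Phi, if_pos hs]
    have hb : 0 < 1 / (4 * s) := by positivity
    have harg : ∀ x : EuclideanSpace ℝ (Fin n),
        -‖x‖ ^ 2 / (4 * s) = -(1 / (4 * s)) * ‖x‖ ^ 2 := fun x => by ring
    simp_rw [harg]
    have hc : 0 ≤ s ^ (α - 1) / Real.Gamma α * (4 * Real.pi * s) ^ (-(n : ℝ) / 2) := by
      have h1 : 0 ≤ s ^ (α - 1) := Real.rpow_nonneg hs.le _
      have h2 : 0 < Real.Gamma α := Real.Gamma_pos_of_pos hα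
      have h3 : 0 ≤ (4 * Real.pi * s) ^ (-(n : ℝ) / 2) := Real.rpow_nonneg (by positivity) _
      positivity
    simp_rw [ENNReal.ofReal_mul hc]
    rw [lintegral_const_mul' _ _ ENNReal.ofReal_ne_top, gauss_lint n hb,
      ← ENNReal.ofReal_mul hc]
    congr 1
    have hps : 0 < 4 * Real.pi * s := by positivity
    have : Real.pi / (1 / (4 * s)) = 4 * Real.pi * s := by field_simp
    rw [this, mul_assoc, ← Real.rpow_add hps]
    rw [show (-(n : ℝ) / 2 + (n : ℝ) / 2) = 0 by ring, Real.rpow_zero, mul_one]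
  · simp [Phi, if_neg hs]

lemma lintegral_Phi_sub (n : ℕ) {α : ℝ} (hα : 0 < α) (x : EuclideanSpace ℝ (Fin n)) (s : ℝ) :
    ∫⁻ ξ : EuclideanSpace ℝ (Fin n), ENNReal.ofReal (Phi n α (x - ξ) s) = rho α s := by
  have hmeas : Measurable fun ξ : EuclideanSpace ℝ (Fin n) => ENNReal.ofReal (Phi n α ξ s) :=
    ((measurable_Phi n α).comp (measurable_id.prodMk measurable_const)).ennreal_ofReal
  rw [(Measure.measurePreserving_sub_left volume x).lintegral_comp hmeas]
  exact lintegral_Phi n hα s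

lemma lintegral_Phi_sub' (n : ℕ) {α : ℝ} (hα : 0 < α) (x : EuclideanSpace ℝ (Fin n)) (s : ℝ) :
    ∫⁻ ξ : EuclideanSpace ℝ (Fin n), ENNReal.ofReal (Phi n α (ξ - x) s) = rho α s := by
  rw [lintegral_sub_right_eq_self (fun ξ => ENNReal.ofReal (Phi n α ξ s)) x]
  exact lintegral_Phi n hα s

lemma rho_core {α : ℝ} (hα : 0 < α) {b : ℝ} (hb : 0 ≤ b) :
    ∫⁻ s in Ioc 0 b, rho α s = ENNReal.ofReal (b ^ α / (α * Real.Gamma α)) := by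
  have hΓ : 0 < Real.Gamma α := Real.Gamma_pos_of_pos hα
  have hcongr : ∫⁻ s in Ioc 0 b, rho α s
      = ∫⁻ s in Ioc 0 b, ENNReal.ofReal (s ^ (α - 1) / Real.Gamma α) := by
    refine setLIntegral_congr_fun measurableSet_Ioc (fun s hs => ?_)
    rw [rho, if_pos hs.1]
  rw [hcongr]
  have hint : IntegrableOn (fun s : ℝ => s ^ (α - 1) / Real.Gamma α) (Ioc 0 b) := by
    exact ((intervalIntegral.intervalIntegrable_rpow'
      (by linarith : (-1:ℝ) < α - 1) (a:=0) (b:=b)).1).div_const _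
  rw [← ofReal_integral_eq_lintegral_ofReal hint ?_]
  · congr 1
    rw [integral_div]
    have : ∫ s in Ioc (0:ℝ) b, s ^ (α - 1) = b ^ α / α := by
      rw [← intervalIntegral.integral_of_le hb, integral_rpow (Or.inl (by linarith))]
      rw [Real.zero_rpow (by linarith), sub_add_cancel]
      ring
    rw [this, div_div]
  · refine (ae_restrict_iff' measurableSet_Ioc).2 (ae_of_all _ fun s hs => ?_)
    exact div_nonneg (Real.rpow_nonneg hs.1.le _) hΓ.le

lemma rho_bound_t {α : ℝ} (hα : 0 < α) {T τ : ℝ} (hT : 0 ≤ T) (hτ : 0 ≤ τ) :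
    ∫⁻ t in Ioc 0 T, rho α (t - τ) ≤ ENNReal.ofReal (T ^ α / (α * Real.Gamma α)) := by
  rw [← lintegral_indicator measurableSet_Ioc _]
  have key : ∀ t : ℝ, (Ioc (0:ℝ) T).indicator (fun t => rho α (t - τ)) t
      = ((Ioc (-τ) (T - τ)).indicator (rho α)) (t - τ) := by
    intro t
    by_cases h : t ∈ Ioc (0:ℝ) T
    · rw [Set.indicator_of_mem h, Set.indicator_of_mem
        (show t - τ ∈ Ioc (-τ) (T - τ) from ⟨by linarith [h.1], by linarith [h.2]⟩)]
    · rw [Set.indicator_of_notMem h, Set.indicator_of_notMem (fun hc => h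
        ⟨by linarith [hc.1], by linarith [hc.2]⟩)]
  simp_rw [key]
  rw [lintegral_sub_right_eq_self ((Ioc (-τ) (T - τ)).indicator (rho α)) τ]
  have hmono : ∀ s : ℝ, (Ioc (-τ) (T - τ)).indicator (rho α) s
      ≤ (Ioc (0:ℝ) T).indicator (rho α) s := by
    intro s
    rcases le_or_gt s 0 with h | h
    · calc (Ioc (-τ) (T - τ)).indicator (rho α) s ≤ rho α s := Set.indicator_le_self _ _ _
        _ = 0 := rho_nonpos h
        _ ≤ _ := zero_le
    · by_cases hmem : s ∈ Ioc (-τ) (T - τ)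
      · rw [Set.indicator_of_mem hmem, Set.indicator_of_mem (by
          exact ⟨h, by linarith [hmem.2]⟩)]
      · rw [Set.indicator_of_notMem hmem]; exact zero_le
  calc ∫⁻ s, (Ioc (-τ) (T - τ)).indicator (rho α) s ≤ ∫⁻ s, (Ioc (0:ℝ) T).indicator (rho α) s :=
        lintegral_mono hmono
    _ = ∫⁻ s in Ioc 0 T, rho α s := lintegral_indicator measurableSet_Ioc _
    _ = ENNReal.ofReal (T ^ α / (α * Real.Gamma α)) := rho_core hα hT

lemma rho_bound_tau {α : ℝ} (hα : 0 < α) {T t : ℝ} (hT : 0 ≤ T) (ht : t ≤ T) :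
    ∫⁻ τ in Ici 0, rho α (t - τ) ≤ ENNReal.ofReal (T ^ α / (α * Real.Gamma α)) := by
  rw [← lintegral_indicator measurableSet_Ici _]
  have key : ∀ τ : ℝ, (Ici (0:ℝ)).indicator (fun τ => rho α (t - τ)) τ
      = ((Iic t).indicator (rho α)) (t - τ) := by
    intro τ
    by_cases h : τ ∈ Ici (0:ℝ)
    · rw [Set.indicator_of_mem h, Set.indicator_of_mem
        (show t - τ ∈ Iic t by simp only [mem_Iic]; have := mem_Ici.1 h; linarith)]
    · rw [Set.indicator_of_notMem h, Set.indicator_of_notMem (fun hc => h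
        (mem_Ici.2 (by have := mem_Iic.1 hc; linarith)))]
  simp_rw [key]
  rw [(Measure.measurePreserving_sub_left volume t).lintegral_comp
    ((measurable_rho α).indicator measurableSet_Iic)]
  have hmono : ∀ s : ℝ, (Iic t).indicator (rho α) s ≤ (Ioc (0:ℝ) T).indicator (rho α) s := by
    intro s
    rcases le_or_gt s 0 with h | h
    · calc (Iic t).indicator (rho α) s ≤ rho α s := Set.indicator_le_self _ _ _
        _ = 0 := rho_nonpos h
        _ ≤ _ := zero_le
    · by_cases hmem : s ∈ Iic t
      · rw [Set.indicator_of_mem hmem, Set.indicator_of_mem (by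
          exact ⟨h, le_trans hmem ht⟩)]
      · rw [Set.indicator_of_notMem hmem]; exact zero_le
  calc ∫⁻ s, (Iic t).indicator (rho α) s ≤ ∫⁻ s, (Ioc (0:ℝ) T).indicator (rho α) s :=
        lintegral_mono hmono
    _ = ∫⁻ s in Ioc 0 T, rho α s := lintegral_indicator measurableSet_Ioc _
    _ = ENNReal.ofReal (T ^ α / (α * Real.Gamma α)) := rho_core hα hT

end Aux

set_option maxHeartbeats 2000000 in
theorem J_locally_integrable (n : ℕ) (hn : 1 ≤ n) (p α : ℝ)
    (hp : 1 ≤ p) (hα : 0 < α)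
    (f : EuclideanSpace ℝ (Fin n) → ℝ → ℝ)
    (hf : MemXp n (ENNReal.ofReal p) f) (hpos : ∀ x t, 0 ≤ f x t)
    (hzero : ∀ᵐ q : EuclideanSpace ℝ (Fin n) × ℝ, q.2 < 0 → f q.1 q.2 = 0) :
    ∀ K : Set (EuclideanSpace ℝ (Fin n) × ℝ), IsCompact K →
      K ⊆ {q : EuclideanSpace ℝ (Fin n) × ℝ | 0 < q.2} →
      (∫⁻ q in K, J n α f q.1 q.2) < ⊤ := by
  obtain ⟨hfm, hfLp⟩ := hf
  intro K hK hKpos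
  obtain ⟨T0, hT0⟩ : ∃ T0 : ℝ, ∀ q ∈ K, q.2 ≤ T0 := by
    obtain ⟨T0, hT0⟩ := (hK.image continuous_snd).bddAbove
    exact ⟨T0, fun q hq => hT0 (Set.mem_image_of_mem _ hq)⟩
  set T : ℝ := max T0 0 with hTdef
  have hT : 0 ≤ T := le_max_right _ _
  have hTK : ∀ q ∈ K, q.2 ≤ T := fun q hq => (hT0 q hq).trans (le_max_left _ _)
  set C : ℝ≥0∞ := ENNReal.ofReal (T ^ α / (α * Real.Gamma α)) with hCdef
  have hCne : C ≠ ⊤ := ENNReal.ofReal_ne_top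
  have hKmeas : MeasurableSet K := hK.isClosed.measurableSet
  -- notation
  have hFmeas : Measurable (fun w : EuclideanSpace ℝ (Fin n) × ℝ =>
    ENNReal.ofReal (f w.1 w.2)) := hfm.ennreal_ofReal
  have hkermeas : Measurable fun z : (EuclideanSpace ℝ (Fin n) × ℝ) ×
      (EuclideanSpace ℝ (Fin n) × ℝ) =>
      ENNReal.ofReal (Phi n α (z.1.1 - z.2.1) (z.1.2 - z.2.2)) := by
    exact ((measurable_Phi n α).comp
      ((measurable_fst.fst.sub measurable_snd.fst).prodMk
        (measurable_fst.snd.sub measurable_snd.snd))).ennreal_ofReal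
  set g : EuclideanSpace ℝ (Fin n) × ℝ → ℝ≥0∞ :=
    fun w => ∫⁻ q in K, ENNReal.ofReal (Phi n α (q.1 - w.1) (q.2 - w.2)) with hgdef
  have hgmeas : Measurable g := by
    exact Measurable.lintegral_prod_right' (hkermeas.comp measurable_swap)
  -- pointwise bound on J
  have hJle : ∀ q : EuclideanSpace ℝ (Fin n) × ℝ, J n α f q.1 q.2
      ≤ ∫⁻ w : EuclideanSpace ℝ (Fin n) × ℝ,
          ENNReal.ofReal (Phi n α (q.1 - w.1) (q.2 - w.2)) * ENNReal.ofReal (f w.1 w.2) := by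
    intro q
    unfold J
    have h1 : ∀ τ (ξ : EuclideanSpace ℝ (Fin n)),
        ENNReal.ofReal (Phi n α (q.1 - ξ) (q.2 - τ) * f ξ τ)
        = ENNReal.ofReal (Phi n α (q.1 - ξ) (q.2 - τ)) * ENNReal.ofReal (f ξ τ) :=
      fun τ ξ => ENNReal.ofReal_mul (Phi_nonneg n hα _ _)
    simp_rw [h1]
    have hmeas2 : AEMeasurable (Function.uncurry fun (τ : ℝ) (ξ : EuclideanSpace ℝ (Fin n)) =>
        ENNReal.ofReal (Phi n α (q.1 - ξ) (q.2 - τ)) * ENNReal.ofReal (f ξ τ))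
        ((volume : Measure ℝ).prod (volume : Measure (EuclideanSpace ℝ (Fin n)))) := by
      apply Measurable.aemeasurable
      refine Measurable.mul (f := fun z : ℝ × EuclideanSpace ℝ (Fin n) => ENNReal.ofReal (Phi n α (q.1 - z.2) (q.2 - z.1)))
        (g := fun z : ℝ × EuclideanSpace ℝ (Fin n) => ENNReal.ofReal (f z.2 z.1)) ?_ ?_
      · exact ((measurable_Phi n α).comp
          (((measurable_const.sub measurable_snd).prodMk
            (measurable_const.sub measurable_fst)))).ennreal_ofReal
      · exact (hfm.comp (measurable_snd.prodMk measurable_fst)).ennreal_ofReal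
    calc ∫⁻ τ in Iio q.2, ∫⁻ ξ,
          ENNReal.ofReal (Phi n α (q.1 - ξ) (q.2 - τ)) * ENNReal.ofReal (f ξ τ)
        ≤ ∫⁻ τ, ∫⁻ ξ,
          ENNReal.ofReal (Phi n α (q.1 - ξ) (q.2 - τ)) * ENNReal.ofReal (f ξ τ) :=
          setLIntegral_le_lintegral _ _
      _ = ∫⁻ w : EuclideanSpace ℝ (Fin n) × ℝ,
          ENNReal.ofReal (Phi n α (q.1 - w.1) (q.2 - w.2)) * ENNReal.ofReal (f w.1 w.2)
            ∂((volume : Measure (EuclideanSpace ℝ (Fin n))).prod (volume : Measure ℝ)) :=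
          lintegral_lintegral_symm hmeas2
      _ = ∫⁻ w : EuclideanSpace ℝ (Fin n) × ℝ,
          ENNReal.ofReal (Phi n α (q.1 - w.1) (q.2 - w.2)) * ENNReal.ofReal (f w.1 w.2) := by
          rw [← Measure.volume_eq_prod]
  -- bounds on g
  have hgC : ∀ w : EuclideanSpace ℝ (Fin n) × ℝ, 0 ≤ w.2 → g w ≤ C := by
    intro w hw2
    have hsub : K ⊆ (univ : Set (EuclideanSpace ℝ (Fin n))) ×ˢ Ioc (0:ℝ) T :=
      fun q hq => ⟨trivial, hKpos hq, hTK q hq⟩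
    calc g w ≤ ∫⁻ q in (univ : Set (EuclideanSpace ℝ (Fin n))) ×ˢ Ioc (0:ℝ) T,
          ENNReal.ofReal (Phi n α (q.1 - w.1) (q.2 - w.2)) := lintegral_mono_set hsub
      _ = ∫⁻ t in Ioc (0:ℝ) T, ∫⁻ ξ, ENNReal.ofReal (Phi n α (ξ - w.1) (t - w.2)) := by
          rw [Measure.volume_eq_prod, ← Measure.prod_restrict, Measure.restrict_univ]
          exact lintegral_prod_symm' _ (((measurable_Phi n α).comp
            ((measurable_fst.sub measurable_const).prodMk
              (measurable_snd.sub measurable_const))).ennreal_ofReal)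
      _ = ∫⁻ t in Ioc (0:ℝ) T, rho α (t - w.2) := by
          refine lintegral_congr fun t => ?_
          exact lintegral_Phi_sub' n hα w.1 (t - w.2)
      _ ≤ C := rho_bound_t hα hT hw2
  have hgzero : ∀ w : EuclideanSpace ℝ (Fin n) × ℝ, T ≤ w.2 → g w = 0 := by
    intro w hw2
    have h0 : ∀ q ∈ K, ENNReal.ofReal (Phi n α (q.1 - w.1) (q.2 - w.2)) = (0:ℝ≥0∞) := by
      intro q hq
      rw [Phi_nonpos n α _ (by have := hTK q hq; linarith : q.2 - w.2 ≤ 0)]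
      simp
    calc g w = ∫⁻ _ in K, (0:ℝ≥0∞) := setLIntegral_congr_fun hKmeas h0
      _ = 0 := lintegral_zero
  have hgM : ∫⁻ w in (univ : Set (EuclideanSpace ℝ (Fin n))) ×ˢ Ici (0:ℝ), g w
      ≤ C * volume K := by
    have hswap := lintegral_lintegral_swap
      (μ := volume.restrict ((univ : Set (EuclideanSpace ℝ (Fin n))) ×ˢ Ici (0:ℝ)))
      (ν := volume.restrict K)
      (f := fun w q => ENNReal.ofReal (Phi n α (q.1 - w.1) (q.2 - w.2)))
      (hkermeas.comp measurable_swap).aemeasurable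
    rw [hgdef]
    rw [hswap]
    have hinner : ∀ q ∈ K, ∫⁻ w in (univ : Set (EuclideanSpace ℝ (Fin n))) ×ˢ Ici (0:ℝ),
        ENNReal.ofReal (Phi n α (q.1 - w.1) (q.2 - w.2)) ≤ C := by
      intro q hq
      calc ∫⁻ w in (univ : Set (EuclideanSpace ℝ (Fin n))) ×ˢ Ici (0:ℝ),
            ENNReal.ofReal (Phi n α (q.1 - w.1) (q.2 - w.2))
          = ∫⁻ τ in Ici (0:ℝ), ∫⁻ ξ, ENNReal.ofReal (Phi n α (q.1 - ξ) (q.2 - τ)) := by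
            rw [Measure.volume_eq_prod, ← Measure.prod_restrict, Measure.restrict_univ]
            exact lintegral_prod_symm' _ (((measurable_Phi n α).comp
              ((measurable_const.sub measurable_fst).prodMk
                (measurable_const.sub measurable_snd))).ennreal_ofReal)
        _ = ∫⁻ τ in Ici (0:ℝ), rho α (q.2 - τ) := by
            refine lintegral_congr fun τ => ?_
            exact lintegral_Phi_sub n hα q.1 (q.2 - τ)
        _ ≤ C := rho_bound_tau hα hT (hTK q hq)
    calc ∫⁻ q in K, ∫⁻ w in (univ : Set (EuclideanSpace ℝ (Fin n))) ×ˢ Ici (0:ℝ),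
          ENNReal.ofReal (Phi n α (q.1 - w.1) (q.2 - w.2))
        ≤ ∫⁻ _ in K, C := by
          refine lintegral_mono_ae ((ae_restrict_iff' hKmeas).2 (ae_of_all _ hinner))
      _ = C * volume K := setLIntegral_const _ _
  -- the Lp bound
  have hLp : ∫⁻ w in {q : EuclideanSpace ℝ (Fin n) × ℝ | q.2 < T}, ENNReal.ofReal (f w.1 w.2) ^ p < ⊤ := by
    have h := hfLp T
    have hne : (ENNReal.ofReal p) ≠ 0 := by
      simp only [ne_eq, ENNReal.ofReal_eq_zero, not_le]; linarith
    rw [eLpNorm_eq_lintegral_rpow_enorm_toReal hne ENNReal.ofReal_ne_top] at h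
    rw [ENNReal.toReal_ofReal (by linarith : (0:ℝ) ≤ p)] at h
    have h2 := (ENNReal.rpow_lt_top_iff_of_pos
      (by positivity : (0:ℝ) < 1 / p)).1 h
    have hcong : ∀ w : EuclideanSpace ℝ (Fin n) × ℝ,
        ‖Function.uncurry f w‖ₑ ^ p = ENNReal.ofReal (f w.1 w.2) ^ p := by
      intro w
      congr 1
      rw [← Real.enorm_eq_ofReal (hpos w.1 w.2)]
      rfl
    simp_rw [hcong] at h2
    exact h2
  -- pointwise a.e. bound
  set A : Set (EuclideanSpace ℝ (Fin n) × ℝ) := Prod.snd ⁻¹' Ico (0:ℝ) T with hAdef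
  have hAmeas : MeasurableSet A := measurable_snd measurableSet_Ico
  have hae : ∀ᵐ w : EuclideanSpace ℝ (Fin n) × ℝ,
      g w * ENNReal.ofReal (f w.1 w.2) ≤ A.indicator (fun w => C * ENNReal.ofReal (f w.1 w.2) ^ p + g w) w := by
    filter_upwards [hzero] with w hw
    rcases lt_or_ge w.2 0 with hw2 | hw2
    · rw [hw hw2]
      simp
    · rcases lt_or_ge w.2 T with hw3 | hw3
      · rw [Set.indicator_of_mem (show w ∈ A from ⟨hw2, hw3⟩)]
        have hFle : ENNReal.ofReal (f w.1 w.2)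
            ≤ ENNReal.ofReal (f w.1 w.2) ^ p + 1 := by
          rcases le_total (ENNReal.ofReal (f w.1 w.2)) 1 with h | h
          · exact h.trans le_add_self
          · calc ENNReal.ofReal (f w.1 w.2)
                = ENNReal.ofReal (f w.1 w.2) ^ (1:ℝ) := (ENNReal.rpow_one _).symm
              _ ≤ ENNReal.ofReal (f w.1 w.2) ^ p :=
                  ENNReal.rpow_le_rpow_of_exponent_le h hp
              _ ≤ ENNReal.ofReal (f w.1 w.2) ^ p + 1 := le_self_add
        calc g w * ENNReal.ofReal (f w.1 w.2)
            = ENNReal.ofReal (f w.1 w.2) * g w := mul_comm _ _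
          _ ≤ (ENNReal.ofReal (f w.1 w.2) ^ p + 1) * g w := mul_le_mul_left hFle _
          _ = ENNReal.ofReal (f w.1 w.2) ^ p * g w + g w := by rw [add_mul, one_mul]
          _ ≤ ENNReal.ofReal (f w.1 w.2) ^ p * C + g w :=
              add_le_add_left (mul_le_mul_right (hgC w hw2) _) _
          _ = C * ENNReal.ofReal (f w.1 w.2) ^ p + g w := by
              rw [mul_comm (ENNReal.ofReal (f w.1 w.2) ^ p) C]
      · rw [hgzero w hw3, zero_mul]
        exact zero_le
  -- put everything together
  have hswapmeas : AEMeasurable (Function.uncurry fun (q w : EuclideanSpace ℝ (Fin n) × ℝ) =>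
      ENNReal.ofReal (Phi n α (q.1 - w.1) (q.2 - w.2)) * ENNReal.ofReal (f w.1 w.2))
      ((volume.restrict K).prod volume) := by
    exact (hkermeas.mul (hFmeas.comp measurable_snd)).aemeasurable
  calc ∫⁻ q in K, J n α f q.1 q.2
      ≤ ∫⁻ q in K, ∫⁻ w : EuclideanSpace ℝ (Fin n) × ℝ,
          ENNReal.ofReal (Phi n α (q.1 - w.1) (q.2 - w.2)) * ENNReal.ofReal (f w.1 w.2) :=
        lintegral_mono fun q => hJle q
    _ = ∫⁻ w : EuclideanSpace ℝ (Fin n) × ℝ, ∫⁻ q in K,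
          ENNReal.ofReal (Phi n α (q.1 - w.1) (q.2 - w.2)) * ENNReal.ofReal (f w.1 w.2) :=
        lintegral_lintegral_swap hswapmeas
    _ = ∫⁻ w : EuclideanSpace ℝ (Fin n) × ℝ, g w * ENNReal.ofReal (f w.1 w.2) := by
        refine lintegral_congr fun w => ?_
        exact lintegral_mul_const' (ENNReal.ofReal (f w.1 w.2)) _ ENNReal.ofReal_ne_top
    _ ≤ ∫⁻ w : EuclideanSpace ℝ (Fin n) × ℝ, A.indicator (fun w => C * ENNReal.ofReal (f w.1 w.2) ^ p + g w) w := lintegral_mono_ae hae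
    _ = ∫⁻ w in A, (C * ENNReal.ofReal (f w.1 w.2) ^ p + g w) := lintegral_indicator hAmeas _
    _ = (∫⁻ w in A, C * ENNReal.ofReal (f w.1 w.2) ^ p) + ∫⁻ w in A, g w :=
        lintegral_add_left ((hFmeas.pow_const p).const_mul C) _
    _ < ⊤ := by
        have hb1 : (∫⁻ w in A, C * ENNReal.ofReal (f w.1 w.2) ^ p) < ⊤ := by
          rw [lintegral_const_mul' C _ hCne]
          refine ENNReal.mul_lt_top hCne.lt_top ?_
          refine lt_of_le_of_lt ?_ hLp
          exact lintegral_mono_set fun w hw => hw.2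
        have hb2 : (∫⁻ w in A, g w) < ⊤ := by
          refine lt_of_le_of_lt ?_ (lt_of_le_of_lt hgM ?_)
          · exact lintegral_mono_set fun w hw => ⟨trivial, hw.1⟩
          · exact ENNReal.mul_lt_top hCne.lt_top hK.measure_lt_top
        exact ENNReal.add_lt_top.2 ⟨hb1, hb2⟩
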